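/- Let ℬ = M_m ⊆ 𝒜 = ⊕ᵢ M_{nᵢ} with each nᵢ = m·kᵢ. Then the inclusion (M_m ⊆ 𝒜) is isomorphic to the tensor product of the trivial inclusion (M_m ⊆ M_m) with the inclusion (ℂ ⊆ ⊕ᵢ M_{kᵢ}); consequently, if E preserves the Markov trace, (M_m ⊆ 𝒜, E) admits a unitary orthonormal basis of cardinality Σᵢ kᵢ². -/

import Mathlib

open Finset Matrix
open scoped TensorProduct Kronecker

section FullSub

variable (s m : ℕ) (k : Fin s → ℕ)

/-- The unital inclusion of ℬ = M_m into 𝒜 = ⊕ᵢ M_{nᵢ} with nᵢ = m·kᵢ: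
Y ↦ ⊕ᵢ (Y ⊗ 1_{kᵢ}). -/
def fullIncl (Y : Matrix (Fin m) (Fin m) ℂ) :
    ∀ i, Matrix (Fin m × Fin (k i)) (Fin m × Fin (k i)) ℂ :=
  fun _ p q => Y p.1 q.1 * (if p.2 = q.2 then 1 else 0)

/-- The Markov trace on 𝒜 = ⊕ᵢ M_{m·kᵢ}, with trace vector the dimension
vector ñ = (m·kᵢ)ᵢ. -/
noncomputable def markovTrace
    (X : ∀ i, Matrix (Fin m × Fin (k i)) (Fin m × Fin (k i)) ℂ) : ℂ :=
  (∑ i, ((m * k i : ℕ) : ℂ) * Matrix.trace (X i)) / (∑ i, ((m * k i : ℕ) : ℂ) ^ 2)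

end FullSub

namespace FullSubProof


variable (s m : ℕ) (k : Fin s → ℕ)

noncomputable def leftHom :
    Matrix (Fin m) (Fin m) ℂ →ₐ[ℂ]
      (∀ i, Matrix (Fin m × Fin (k i)) (Fin m × Fin (k i)) ℂ) where
  toFun Y := fun i => Y ⊗ₖ (1 : Matrix (Fin (k i)) (Fin (k i)) ℂ)
  map_one' := funext fun i => Matrix.one_kronecker_one
  map_mul' Y Z := funext fun i => by
    show ((Y * Z) ⊗ₖ (1 : Matrix (Fin (k i)) (Fin (k i)) ℂ))
      = (Y ⊗ₖ 1) * (Z ⊗ₖ 1)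
    rw [← Matrix.mul_kronecker_mul, Matrix.one_mul]
  map_zero' := funext fun i => Matrix.zero_kronecker _
  map_add' Y Z := funext fun i => Matrix.add_kronecker _ _ _
  commutes' r := funext fun i => by
    show ((algebraMap ℂ (Matrix (Fin m) (Fin m) ℂ) r)
        ⊗ₖ (1 : Matrix (Fin (k i)) (Fin (k i)) ℂ))
      = algebraMap ℂ (∀ i, Matrix (Fin m × Fin (k i)) (Fin m × Fin (k i)) ℂ) r i
    rw [Pi.algebraMap_apply, Algebra.algebraMap_eq_smul_one,
      Algebra.algebraMap_eq_smul_one, Matrix.smul_kronecker,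
      Matrix.one_kronecker_one]

noncomputable def rightHom :
    (∀ i, Matrix (Fin (k i)) (Fin (k i)) ℂ) →ₐ[ℂ]
      (∀ i, Matrix (Fin m × Fin (k i)) (Fin m × Fin (k i)) ℂ) where
  toFun C := fun i => (1 : Matrix (Fin m) (Fin m) ℂ) ⊗ₖ C i
  map_one' := funext fun i => Matrix.one_kronecker_one
  map_mul' C D := funext fun i => by
    show ((1 : Matrix (Fin m) (Fin m) ℂ) ⊗ₖ ((C * D) i))
      = (1 ⊗ₖ C i) * (1 ⊗ₖ D i)
    rw [Pi.mul_apply, ← Matrix.mul_kronecker_mul, Matrix.one_mul]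
  map_zero' := funext fun i => Matrix.kronecker_zero _
  map_add' C D := funext fun i => Matrix.kronecker_add _ _ _
  commutes' r := funext fun i => by
    show ((1 : Matrix (Fin m) (Fin m) ℂ)
        ⊗ₖ ((algebraMap ℂ (∀ i, Matrix (Fin (k i)) (Fin (k i)) ℂ) r) i))
      = algebraMap ℂ (∀ i, Matrix (Fin m × Fin (k i)) (Fin m × Fin (k i)) ℂ) r i
    rw [Pi.algebraMap_apply, Pi.algebraMap_apply, Algebra.algebraMap_eq_smul_one,
      Algebra.algebraMap_eq_smul_one, Matrix.kronecker_smul,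
      Matrix.one_kronecker_one]

lemma leftHom_apply (Y : Matrix (Fin m) (Fin m) ℂ) (i : Fin s) :
    leftHom s m k Y i = Y ⊗ₖ (1 : Matrix (Fin (k i)) (Fin (k i)) ℂ) := rfl

lemma rightHom_apply (C : ∀ i, Matrix (Fin (k i)) (Fin (k i)) ℂ) (i : Fin s) :
    rightHom s m k C i = (1 : Matrix (Fin m) (Fin m) ℂ) ⊗ₖ C i := rfl

lemma commute_legs (Y : Matrix (Fin m) (Fin m) ℂ)
    (C : ∀ i, Matrix (Fin (k i)) (Fin (k i)) ℂ) :
    Commute (leftHom s m k Y) (rightHom s m k C) := by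
  show leftHom s m k Y * rightHom s m k C = rightHom s m k C * leftHom s m k Y
  funext i
  rw [Pi.mul_apply, Pi.mul_apply, leftHom_apply, rightHom_apply,
    ← Matrix.mul_kronecker_mul, ← Matrix.mul_kronecker_mul,
    Matrix.one_mul, Matrix.mul_one, Matrix.one_mul, Matrix.mul_one]

noncomputable def bigHom :
    (Matrix (Fin m) (Fin m) ℂ) ⊗[ℂ] (∀ i, Matrix (Fin (k i)) (Fin (k i)) ℂ) →ₐ[ℂ]
      (∀ i, Matrix (Fin m × Fin (k i)) (Fin m × Fin (k i)) ℂ) :=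
  Algebra.TensorProduct.lift (leftHom s m k) (rightHom s m k) (commute_legs s m k)

lemma bigHom_tmul (Y : Matrix (Fin m) (Fin m) ℂ)
    (C : ∀ i, Matrix (Fin (k i)) (Fin (k i)) ℂ) :
    bigHom s m k (Y ⊗ₜ[ℂ] C) = fun i => Y ⊗ₖ C i := by
  rw [bigHom, Algebra.TensorProduct.lift_tmul]
  funext i
  rw [Pi.mul_apply, leftHom_apply, rightHom_apply,
    ← Matrix.mul_kronecker_mul, Matrix.one_mul, Matrix.mul_one]

lemma stdBM_kron {n₁ n₂ : ℕ} (p : Fin n₁) (q : Fin n₁) (r t : Fin n₂) (c : ℂ) :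
    (Matrix.single p q c) ⊗ₖ (Matrix.single r t (1 : ℂ))
      = Matrix.single (p, r) (q, t) c := by
  ext ⟨p', r'⟩ ⟨q', t'⟩
  simp only [Matrix.kroneckerMap_apply, Matrix.single, Matrix.of_apply,
    Prod.mk.injEq, ite_and, mul_ite, mul_one, mul_zero]
  by_cases h1 : p = p' <;> by_cases h2 : q = q' <;> by_cases h3 : r = r' <;>
    by_cases h4 : t = t' <;> simp [h1, h2, h3, h4]

lemma bigHom_surjective : Function.Surjective (bigHom s m k) := by
  intro X
  suffices h : X ∈ (bigHom s m k).range by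
    exact (AlgHom.mem_range _).mp h
  have hX : X = ∑ i : Fin s, (Pi.single i (X i) :
      ∀ j, Matrix (Fin m × Fin (k j)) (Fin m × Fin (k j)) ℂ) :=
    (Finset.univ_sum_single X).symm
  rw [hX]
  refine Subalgebra.sum_mem _ fun i _ => ?_
  have hXi : (Pi.single i (X i) :
      ∀ j, Matrix (Fin m × Fin (k j)) (Fin m × Fin (k j)) ℂ)
      = ∑ a : Fin m × Fin (k i), ∑ b : Fin m × Fin (k i),
          (Pi.single i (Matrix.single a b (X i a b)) :
            ∀ j, Matrix (Fin m × Fin (k j)) (Fin m × Fin (k j)) ℂ) := by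
    have h0 := matrix_eq_sum_single (X i)
    calc (Pi.single i (X i) : ∀ j, Matrix (Fin m × Fin (k j)) (Fin m × Fin (k j)) ℂ)
        = (LinearMap.single ℂ _ i) (X i) := rfl
      _ = (LinearMap.single ℂ _ i) (∑ a : Fin m × Fin (k i), ∑ b : Fin m × Fin (k i),
            Matrix.single a b (X i a b)) := by rw [← h0]
      _ = _ := by rw [map_sum]; exact Finset.sum_congr rfl fun a _ => map_sum _ _ _
  rw [hXi]
  refine Subalgebra.sum_mem _ fun a _ => Subalgebra.sum_mem _ fun b _ => ?_
  rw [AlgHom.mem_range]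
  refine ⟨(Matrix.single a.1 b.1 (X i a b)) ⊗ₜ[ℂ]
    (Pi.single i (Matrix.single a.2 b.2 (1 : ℂ))), ?_⟩
  rw [bigHom_tmul]
  funext j
  by_cases hij : j = i
  · subst hij
    rw [Pi.single_eq_same, Pi.single_eq_same, stdBM_kron]
  · rw [Pi.single_eq_of_ne hij, Pi.single_eq_of_ne hij, Matrix.kronecker_zero]

lemma finrank_eq :
    Module.finrank ℂ ((Matrix (Fin m) (Fin m) ℂ) ⊗[ℂ]
        (∀ i, Matrix (Fin (k i)) (Fin (k i)) ℂ))
      = Module.finrank ℂ (∀ i, Matrix (Fin m × Fin (k i)) (Fin m × Fin (k i)) ℂ) := by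
  rw [Module.finrank_tensorProduct, Module.finrank_pi_fintype,
    Module.finrank_pi_fintype]
  simp only [Module.finrank_matrix, Module.finrank_self, Fintype.card_fin,
    Fintype.card_prod, mul_one]
  rw [Finset.mul_sum]
  exact Finset.sum_congr rfl fun i _ => by ring

lemma bigHom_injective : Function.Injective (bigHom s m k) := by
  have h := (LinearMap.injective_iff_surjective_of_finrank_eq_finrank
    (f := (bigHom s m k).toLinearMap) (finrank_eq s m k))
  exact h.mpr (bigHom_surjective s m k)

noncomputable def bigEquiv :
    (∀ i, Matrix (Fin m × Fin (k i)) (Fin m × Fin (k i)) ℂ) ≃ₐ[ℂ]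
      (Matrix (Fin m) (Fin m) ℂ) ⊗[ℂ] (∀ i, Matrix (Fin (k i)) (Fin (k i)) ℂ) :=
  (AlgEquiv.ofBijective (bigHom s m k)
    ⟨bigHom_injective s m k, bigHom_surjective s m k⟩).symm

lemma bigHom_one_tmul (Y : Matrix (Fin m) (Fin m) ℂ) :
    bigHom s m k (Y ⊗ₜ[ℂ] 1) = fullIncl s m k Y := by
  rw [bigHom_tmul]
  funext i p q
  rw [Pi.one_apply, Matrix.kroneckerMap_apply, fullIncl, Matrix.one_apply]

lemma bigEquiv_fullIncl (Y : Matrix (Fin m) (Fin m) ℂ) :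
    bigEquiv s m k (fullIncl s m k Y) = Y ⊗ₜ[ℂ] 1 := by
  rw [bigEquiv, ← bigHom_one_tmul s m k Y]
  have : bigHom s m k (Y ⊗ₜ[ℂ] 1)
      = (AlgEquiv.ofBijective (bigHom s m k)
          ⟨bigHom_injective s m k, bigHom_surjective s m k⟩) (Y ⊗ₜ[ℂ] 1) := rfl
  rw [this, AlgEquiv.symm_apply_apply]




/-! ### Roots of unity toolkit -/

noncomputable def ph (n : ℕ) (x : ℤ) : ℂ :=
  Complex.exp (2 * (Real.pi : ℂ) * Complex.I * (x : ℂ) / (n : ℂ))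

lemma ph_zero (n : ℕ) : ph n 0 = 1 := by simp [ph]

lemma ph_add (n : ℕ) (x y : ℤ) : ph n (x + y) = ph n x * ph n y := by
  rw [ph, ph, ph, ← Complex.exp_add]
  congr 1
  push_cast
  ring

lemma ph_conj (n : ℕ) (x : ℤ) : (starRingEnd ℂ) (ph n x) = ph n (-x) := by
  rw [ph, ph, ← Complex.exp_conj]
  congr 1
  simp only [map_div₀, _root_.map_mul, map_ofNat, Complex.conj_ofReal, Complex.conj_I,
    map_intCast, map_natCast]
  push_cast
  ring

lemma ph_pow (n : ℕ) (e : ℤ) (x : ℕ) : ph n (e * x) = ph n e ^ x := by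
  rw [ph, ph, ← Complex.exp_nat_mul]
  congr 1
  push_cast
  ring

lemma ph_nmul (n : ℕ) (hn : 0 < n) (e : ℤ) : ph n (n * e) = 1 := by
  have hn' : (n : ℂ) ≠ 0 := Nat.cast_ne_zero.mpr hn.ne'
  rw [ph]
  have : 2 * (Real.pi : ℂ) * Complex.I * ((n * e : ℤ) : ℂ) / (n : ℂ)
      = (e : ℂ) * (2 * (Real.pi : ℂ) * Complex.I) := by
    field_simp
    push_cast
    ring
  rw [this, Complex.exp_int_mul_two_pi_mul_I]

lemma ph_pow_self (n : ℕ) (hn : 0 < n) (e : ℤ) : ph n e ^ n = 1 := by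
  rw [← ph_pow, mul_comm, ph_nmul n hn]

lemma ph_ne_one (n : ℕ) (hn : 0 < n) (e : ℤ) (he : ¬ (n : ℤ) ∣ e) : ph n e ≠ 1 := by
  intro h
  rw [ph, Complex.exp_eq_one_iff] at h
  obtain ⟨c, hc⟩ := h
  have hn' : (n : ℂ) ≠ 0 := Nat.cast_ne_zero.mpr hn.ne'
  rw [div_eq_iff hn'] at hc
  have h2pi : (2 * (Real.pi : ℂ) * Complex.I) ≠ 0 := by
    apply mul_ne_zero (mul_ne_zero two_ne_zero _) Complex.I_ne_zero
    exact Complex.ofReal_ne_zero.mpr Real.pi_ne_zero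
  have h2 : (e : ℂ) = (c : ℂ) * n := by
    apply mul_left_cancel₀ h2pi
    linear_combination hc
  have h3 : e = c * n := by exact_mod_cast h2
  exact he ⟨c, by rw [h3, mul_comm]⟩

lemma ph_geom (n : ℕ) (hn : 0 < n) (d : ℤ) :
    ∑ a ∈ Finset.range n, ph n (d * a) = if (n : ℤ) ∣ d then (n : ℂ) else 0 := by
  have hrw : ∀ a : ℕ, ph n (d * a) = ph n d ^ a := fun a => ph_pow n d a
  simp_rw [hrw]
  by_cases h : (n : ℤ) ∣ d
  · obtain ⟨c, rfl⟩ := h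
    rw [if_pos ⟨c, rfl⟩, ph_nmul n hn]
    simp
  · rw [if_neg h]
    have h1 := geom_sum_mul (ph n d) n
    rw [ph_pow_self n hn d, sub_self] at h1
    rcases mul_eq_zero.mp h1 with h2 | h2
    · exact h2
    · exact absurd (sub_eq_zero.mp h2) (ph_ne_one n hn d h)

/-! ### Interval offsets -/

variable (s : ℕ) (k : Fin s → ℕ)

def off (j : ℕ) : ℕ := ∑ i ∈ Finset.univ.filter (fun i : Fin s => (i : ℕ) < j), k i ^ 2

lemma off_zero : off s k 0 = 0 := by simp [off]

lemma off_last : off s k s = ∑ i, k i ^ 2 := by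
  rw [off]
  congr 1
  apply Finset.filter_true_of_mem
  exact fun i _ => i.isLt

lemma off_succ (i : Fin s) : off s k ((i : ℕ) + 1) = off s k i + k i ^ 2 := by
  rw [off, off]
  have h : Finset.univ.filter (fun j : Fin s => (j : ℕ) < (i : ℕ) + 1)
      = insert i (Finset.univ.filter (fun j : Fin s => (j : ℕ) < (i : ℕ))) := by
    ext j
    simp only [Finset.mem_filter, Finset.mem_univ, true_and, Finset.mem_insert]
    constructor
    · intro hj
      rcases Nat.lt_succ_iff_lt_or_eq.mp hj with h' | h'
      · exact Or.inr h'
      · exact Or.inl (Fin.ext h')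
    · rintro (rfl | hj)
      · omega
      · omega
  rw [h, Finset.sum_insert (by simp)]
  ring

/-! ### The explicit unitary orthonormal system -/

noncomputable def ubase (t : ℕ) (i : Fin s) : Matrix (Fin (k i)) (Fin (k i)) ℂ :=
  fun a b => ph (∑ j, k j ^ 2) ((t * (off s k i + a + k i * b) : ℕ) : ℤ)
      * ph (k i) ((a * b : ℕ) : ℤ) / ((Real.sqrt (k i) : ℝ) : ℂ)

lemma sqrt_mul_self_c (n : ℕ) :
    ((Real.sqrt n : ℝ) : ℂ) * ((Real.sqrt n : ℝ) : ℂ) = (n : ℂ) := by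
  rw [← Complex.ofReal_mul, Real.mul_self_sqrt (Nat.cast_nonneg n)]
  simp

lemma ubase_conj_mul (t t' : ℕ) (i : Fin s) (a b a' b' : Fin (k i)) (hk : 0 < k i) :
    (starRingEnd ℂ) (ubase s k t i a b) * ubase s k t' i a' b'
      = ph (∑ j, k j ^ 2)
          ((t' : ℤ) * ((off s k i : ℤ) + (a' : ℤ) + (k i : ℤ) * (b' : ℤ))
            - (t : ℤ) * ((off s k i : ℤ) + (a : ℤ) + (k i : ℤ) * (b : ℤ)))
        * ph (k i) ((a' : ℤ) * (b' : ℤ) - (a : ℤ) * (b : ℤ)) / (k i : ℂ) := by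
  rw [ubase, ubase]
  simp only [map_div₀, _root_.map_mul, ph_conj, Complex.conj_ofReal]
  rw [div_mul_div_comm, sqrt_mul_self_c]
  congr 1
  rw [mul_mul_mul_comm, ← ph_add, ← ph_add]
  congr 1
  · congr 1
    push_cast
    ring
  · congr 1
    push_cast
    ring

end FullSubProof

namespace FullSubProof
variable (s : ℕ) (k : Fin s → ℕ)

lemma ubase_unitary (hk : ∀ i, 0 < k i) (t : ℕ) (i : Fin s) :
    (ubase s k t i)ᴴ * ubase s k t i = 1 := by
  ext b b'
  rw [Matrix.mul_apply]
  simp_rw [Matrix.conjTranspose_apply, Complex.star_def]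
  set d : ℤ := (b' : ℤ) - (b : ℤ) with hd
  have key : ∀ a : Fin (k i),
      (starRingEnd ℂ) (ubase s k t i a b) * ubase s k t i a b'
        = ph (∑ j, k j ^ 2) ((t : ℤ) * (k i : ℤ) * d)
            * ph (k i) (d * (a : ℤ)) / (k i : ℂ) := by
    intro a
    rw [ubase_conj_mul s k t t i a b a b' (hk i)]
    congr 2
    · congr 1
      rw [hd]
      ring
    · congr 1
      rw [hd]
      ring
  simp_rw [key]
  rw [← Finset.sum_div, ← Finset.mul_sum]
  have hsum : (∑ a : Fin (k i), ph (k i) (d * ((a : ℕ) : ℤ)))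
      = if (k i : ℤ) ∣ d then ((k i : ℕ) : ℂ) else 0 := by
    rw [Fin.sum_univ_eq_sum_range (fun a : ℕ => ph (k i) (d * (a : ℤ))) (k i)]
    exact ph_geom (k i) (hk i) d
  by_cases hbb : b = b'
  · subst hbb
    have hd0 : d = 0 := by rw [hd]; ring
    rw [hd0] at hsum ⊢
    rw [mul_zero, ph_zero, one_mul, hsum, if_pos (dvd_zero _)]
    rw [Matrix.one_apply_eq]
    exact div_self (Nat.cast_ne_zero.mpr (hk i).ne')
  · have hnd : ¬ ((k i : ℤ) ∣ d) := by
      intro hdvd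
      have h1 : (b : ℕ) < k i := b.isLt
      have h2 : (b' : ℕ) < k i := b'.isLt
      have h3 : d = 0 := Int.eq_zero_of_dvd_of_natAbs_lt_natAbs hdvd (by omega)
      have : b = b' := by
        apply Fin.ext
        omega
      exact hbb this
    rw [hsum, if_neg hnd, mul_zero, zero_div, Matrix.one_apply_ne hbb]

lemma ubase_gram (hs : 0 < s) (hk : ∀ i, 0 < k i) (t t' : ℕ)
    (ht : t < ∑ j, k j ^ 2) (ht' : t' < ∑ j, k j ^ 2) :
    ∑ i, ((k i : ℂ) * Matrix.trace ((ubase s k t i)ᴴ * ubase s k t' i))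
      = if t = t' then ((∑ j, k j ^ 2 : ℕ) : ℂ) else 0 := by
  set K : ℕ := ∑ j, k j ^ 2 with hK
  have hKpos : 0 < K := by
    rw [hK]
    exact Finset.sum_pos (fun i _ => pow_pos (hk i) 2) ⟨⟨0, hs⟩, Finset.mem_univ _⟩
  set e : ℤ := (t' : ℤ) - (t : ℤ) with he
  set z : ℂ := ph K e with hz
  have hblock : ∀ i : Fin s,
      (k i : ℂ) * Matrix.trace ((ubase s k t i)ᴴ * ubase s k t' i)
        = z ^ (off s k i) * ((∑ a ∈ Finset.range (k i), z ^ a)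
            * (∑ b ∈ Finset.range (k i), (z ^ (k i)) ^ b)) := by
    intro i
    have hterm : ∀ (b a : Fin (k i)),
        (starRingEnd ℂ) (ubase s k t i a b) * ubase s k t' i a b
          = z ^ (off s k i) * (z ^ (a : ℕ) * (z ^ (k i)) ^ (b : ℕ)) / (k i : ℂ) := by
      intro b a
      rw [ubase_conj_mul s k t t' i a b a b (hk i)]
      rw [sub_self, ph_zero, mul_one]
      congr 1
      have harg : (t' : ℤ) * ((off s k i : ℤ) + (a : ℤ) + (k i : ℤ) * (b : ℤ))
            - (t : ℤ) * ((off s k i : ℤ) + (a : ℤ) + (k i : ℤ) * (b : ℤ))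
          = e * (off s k i : ℕ) + (e * (a : ℕ) + (e * (k i : ℕ)) * (b : ℕ)) := by
        rw [he]
        push_cast
        ring
      rw [harg, ph_add, ph_add, ph_pow, ph_pow, ph_pow, ph_pow, ← hK, ← hz]
    have htr : Matrix.trace ((ubase s k t i)ᴴ * ubase s k t' i)
        = (∑ b : Fin (k i), ∑ a : Fin (k i),
            z ^ (off s k i) * (z ^ (a : ℕ) * (z ^ (k i)) ^ (b : ℕ))) / (k i : ℂ) := by
      rw [Matrix.trace]
      simp_rw [Matrix.diag_apply, Matrix.mul_apply, Matrix.conjTranspose_apply,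
        Complex.star_def, hterm]
      simp only [← Finset.sum_div]
    rw [htr]
    rw [mul_comm ((k i : ℂ)) _, div_mul_cancel₀ _ (Nat.cast_ne_zero.mpr (hk i).ne')]
    have hprod : ∑ b : Fin (k i), ∑ a : Fin (k i),
          z ^ (off s k i) * (z ^ (a : ℕ) * (z ^ (k i)) ^ (b : ℕ))
        = z ^ (off s k i) * ((∑ a : Fin (k i), z ^ (a : ℕ))
            * (∑ b : Fin (k i), (z ^ (k i)) ^ (b : ℕ))) := by
      rw [Finset.sum_comm, Finset.sum_mul, Finset.mul_sum]
      refine Finset.sum_congr rfl fun a _ => ?_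
      rw [Finset.mul_sum, Finset.mul_sum]
    rw [hprod, Fin.sum_univ_eq_sum_range (fun n => z ^ n) (k i),
      Fin.sum_univ_eq_sum_range (fun n => (z ^ (k i)) ^ n) (k i)]
  rw [Finset.sum_congr rfl fun i _ => hblock i]
  by_cases htt : t = t'
  · subst htt
    have hz1 : z = 1 := by rw [hz, he, sub_self, ph_zero]
    rw [if_pos rfl]
    simp only [hz1, one_pow, one_mul, Finset.sum_const, Finset.card_range, nsmul_eq_mul,
      mul_one]
    rw [hK]
    push_cast
    exact Finset.sum_congr rfl fun i _ => by ring
  · rw [if_neg htt]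
    have hKdvd : ¬ ((K : ℤ) ∣ e) := by
      intro hdvd
      have h3 : e = 0 := Int.eq_zero_of_dvd_of_natAbs_lt_natAbs hdvd (by omega)
      rw [he] at h3
      omega
    have hzne : z ≠ 1 := ph_ne_one K hKpos e hKdvd
    have hzK : z ^ K = 1 := ph_pow_self K hKpos e
    have hmul : (∑ i : Fin s, z ^ (off s k i) * ((∑ a ∈ Finset.range (k i), z ^ a)
        * (∑ b ∈ Finset.range (k i), (z ^ (k i)) ^ b))) * (z - 1) = 0 := by
      rw [Finset.sum_mul]
      have hterm : ∀ i : Fin s,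
          z ^ (off s k i) * ((∑ a ∈ Finset.range (k i), z ^ a)
            * (∑ b ∈ Finset.range (k i), (z ^ (k i)) ^ b)) * (z - 1)
          = z ^ (off s k ((i : ℕ) + 1)) - z ^ (off s k (i : ℕ)) := by
        intro i
        have h1 : (∑ a ∈ Finset.range (k i), z ^ a) * (z - 1) = z ^ (k i) - 1 :=
          geom_sum_mul z (k i)
        have h2 : (∑ b ∈ Finset.range (k i), (z ^ (k i)) ^ b) * (z ^ (k i) - 1)
            = z ^ (k i * k i) - 1 := by
          have h := geom_sum_mul (z ^ (k i)) (k i)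
          rwa [← pow_mul] at h
        calc z ^ (off s k i) * ((∑ a ∈ Finset.range (k i), z ^ a)
              * (∑ b ∈ Finset.range (k i), (z ^ (k i)) ^ b)) * (z - 1)
            = z ^ (off s k i) * ((∑ b ∈ Finset.range (k i), (z ^ (k i)) ^ b)
              * ((∑ a ∈ Finset.range (k i), z ^ a) * (z - 1))) := by ring
          _ = z ^ (off s k i) * ((∑ b ∈ Finset.range (k i), (z ^ (k i)) ^ b)
              * (z ^ (k i) - 1)) := by rw [h1]
          _ = z ^ (off s k i) * (z ^ (k i * k i) - 1) := by rw [h2]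
          _ = z ^ (off s k i + k i * k i) - z ^ (off s k i) := by
              rw [mul_sub, ← pow_add, mul_one]
          _ = z ^ (off s k ((i : ℕ) + 1)) - z ^ (off s k (i : ℕ)) := by
              rw [off_succ s k i, pow_two]
      rw [Finset.sum_congr rfl fun i _ => hterm i]
      rw [Fin.sum_univ_eq_sum_range
        (fun n => z ^ (off s k (n + 1)) - z ^ (off s k n)) s]
      rw [Finset.sum_range_sub (fun n => z ^ (off s k n)) s]
      rw [off_last, off_zero, pow_zero, ← hK, hzK, sub_self]
    rcases mul_eq_zero.mp hmul with h | h
    · exact h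
    · exact absurd (sub_eq_zero.mp h) hzne




variable (s m : ℕ) (k : Fin s → ℕ)

/-! ### fullIncl basics -/

lemma fullIncl_apply_kron (Y : Matrix (Fin m) (Fin m) ℂ) (i : Fin s) :
    fullIncl s m k Y i = Y ⊗ₖ (1 : Matrix (Fin (k i)) (Fin (k i)) ℂ) := by
  ext p q
  rw [fullIncl, Matrix.kroneckerMap_apply, Matrix.one_apply]

lemma fullIncl_one : fullIncl s m k 1 = 1 := by
  funext i
  rw [fullIncl_apply_kron, Matrix.one_kronecker_one]
  rfl

lemma fullIncl_zero : fullIncl s m k 0 = 0 := by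
  funext i
  rw [fullIncl_apply_kron, Matrix.zero_kronecker]
  rfl

noncomputable def fullInclL :
    Matrix (Fin m) (Fin m) ℂ →ₗ[ℂ]
      (∀ i, Matrix (Fin m × Fin (k i)) (Fin m × Fin (k i)) ℂ) where
  toFun := fullIncl s m k
  map_add' Y Z := by
    funext i
    rw [Pi.add_apply, fullIncl_apply_kron, fullIncl_apply_kron, fullIncl_apply_kron,
      Matrix.add_kronecker]
  map_smul' c Y := by
    funext i
    show fullIncl s m k (c • Y) i = (c • fullIncl s m k Y) i
    rw [Pi.smul_apply, fullIncl_apply_kron, fullIncl_apply_kron,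
      Matrix.smul_kronecker]

@[simp] lemma fullInclL_apply (Y : Matrix (Fin m) (Fin m) ℂ) :
    fullInclL s m k Y = fullIncl s m k Y := rfl

/-! ### trace lemmas -/

lemma trace_stdBM_mul (q p : Fin m) (M : Matrix (Fin m) (Fin m) ℂ) :
    Matrix.trace (Matrix.single q p 1 * M) = M p q := by
  rw [Matrix.trace]
  simp only [Matrix.diag_apply, Matrix.mul_apply, Matrix.single, Matrix.of_apply,
    ite_and, ite_mul, one_mul, zero_mul]
  rw [Finset.sum_comm]
  simp [Finset.sum_ite_eq]

lemma markov_fullIncl (hs : 0 < s) (hm : 0 < m) (hk : ∀ i, 0 < k i)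
    (Y : Matrix (Fin m) (Fin m) ℂ) :
    markovTrace s m k (fullIncl s m k Y) = Matrix.trace Y / m := by
  have hKpos : 0 < ∑ j, k j ^ 2 :=
    Finset.sum_pos (fun i _ => pow_pos (hk i) 2) ⟨⟨0, hs⟩, Finset.mem_univ _⟩
  have htr : ∀ i, Matrix.trace (fullIncl s m k Y i) = (k i : ℂ) * Matrix.trace Y := by
    intro i
    rw [fullIncl_apply_kron, Matrix.trace_kronecker, Matrix.trace_one, Fintype.card_fin]
    ring
  rw [markovTrace]
  rw [Finset.sum_congr rfl fun i _ => by rw [htr i]]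
  have h1 : ∑ i, ((m * k i : ℕ) : ℂ) * ((k i : ℂ) * Matrix.trace Y)
      = (m : ℂ) * ((∑ j, k j ^ 2 : ℕ) : ℂ) * Matrix.trace Y := by
    push_cast
    rw [Finset.mul_sum, Finset.sum_mul]
    exact Finset.sum_congr rfl fun i _ => by ring
  have h2 : ∑ i, ((m * k i : ℕ) : ℂ) ^ 2 = (m : ℂ) ^ 2 * ((∑ j, k j ^ 2 : ℕ) : ℂ) := by
    push_cast
    rw [Finset.mul_sum]
    exact Finset.sum_congr rfl fun i _ => by ring
  rw [h1, h2]
  have hKc : ((∑ j, k j ^ 2 : ℕ) : ℂ) ≠ 0 := Nat.cast_ne_zero.mpr hKpos.ne'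
  have hmc : (m : ℂ) ≠ 0 := Nat.cast_ne_zero.mpr hm.ne'
  have hS : (∑ x : Fin s, ((k x : ℕ) : ℂ) ^ 2) ≠ 0 := by
    push_cast at hKc
    exact hKc
  push_cast
  field_simp

/-! ### kronecker helpers -/

lemma conjTranspose_kron {n₁ n₂ : ℕ} (A : Matrix (Fin n₁) (Fin n₁) ℂ)
    (B : Matrix (Fin n₂) (Fin n₂) ℂ) : (A ⊗ₖ B)ᴴ = Aᴴ ⊗ₖ Bᴴ := by
  ext p q
  simp only [Matrix.conjTranspose_apply, Matrix.kroneckerMap_apply, star_mul']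

lemma kron_sum_right {n₁ n₂ : ℕ} (a : Matrix (Fin n₁) (Fin n₁) ℂ) {ι : Type*}
    (F : Finset ι) (f : ι → Matrix (Fin n₂) (Fin n₂) ℂ) :
    a ⊗ₖ (∑ x ∈ F, f x) = ∑ x ∈ F, a ⊗ₖ f x := by
  ext p q
  simp [Matrix.kroneckerMap_apply, Matrix.sum_apply, Finset.mul_sum]

lemma incl_mul_onekron (B : Matrix (Fin m) (Fin m) ℂ)
    (v : ∀ i, Matrix (Fin (k i)) (Fin (k i)) ℂ) :
    fullIncl s m k B * (fun i => (1 : Matrix (Fin m) (Fin m) ℂ) ⊗ₖ v i)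
      = fun i => B ⊗ₖ v i := by
  funext i
  rw [Pi.mul_apply, fullIncl_apply_kron, ← Matrix.mul_kronecker_mul, Matrix.mul_one,
    Matrix.one_mul]


end FullSubProof

namespace FullSubProof

variable (s m : ℕ) (k : Fin s → ℕ)

/-! ### the unitary family at the big level -/

noncomputable def Wmat (t : ℕ) :
    ∀ i, Matrix (Fin m × Fin (k i)) (Fin m × Fin (k i)) ℂ :=
  fun i => (1 : Matrix (Fin m) (Fin m) ℂ) ⊗ₖ ubase s k t i

lemma star_Wmat (t : ℕ) :
    star (Wmat s m k t)
      = fun i => (1 : Matrix (Fin m) (Fin m) ℂ) ⊗ₖ (ubase s k t i)ᴴ := by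
  funext i
  rw [Pi.star_apply]
  show ((1 : Matrix (Fin m) (Fin m) ℂ) ⊗ₖ ubase s k t i)ᴴ = _
  rw [conjTranspose_kron, Matrix.conjTranspose_one]

lemma starW_mulW (t t' : ℕ) :
    star (Wmat s m k t) * Wmat s m k t'
      = fun i => (1 : Matrix (Fin m) (Fin m) ℂ)
          ⊗ₖ ((ubase s k t i)ᴴ * ubase s k t' i) := by
  rw [star_Wmat]
  funext i
  rw [Pi.mul_apply]
  show ((1 : Matrix (Fin m) (Fin m) ℂ) ⊗ₖ (ubase s k t i)ᴴ)
      * ((1 : Matrix (Fin m) (Fin m) ℂ) ⊗ₖ ubase s k t' i) = _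
  rw [← Matrix.mul_kronecker_mul, Matrix.one_mul]

lemma W_mulW_star (t : ℕ) :
    Wmat s m k t * star (Wmat s m k t)
      = fun i => (1 : Matrix (Fin m) (Fin m) ℂ)
          ⊗ₖ (ubase s k t i * (ubase s k t i)ᴴ) := by
  rw [star_Wmat]
  funext i
  rw [Pi.mul_apply]
  show ((1 : Matrix (Fin m) (Fin m) ℂ) ⊗ₖ ubase s k t i)
      * ((1 : Matrix (Fin m) (Fin m) ℂ) ⊗ₖ (ubase s k t i)ᴴ) = _
  rw [← Matrix.mul_kronecker_mul, Matrix.one_mul]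

lemma Wmat_unitary (hk : ∀ i, 0 < k i) (t : ℕ) :
    Wmat s m k t ∈ unitary (∀ i, Matrix (Fin m × Fin (k i)) (Fin m × Fin (k i)) ℂ) := by
  rw [Unitary.mem_iff]
  constructor
  · rw [starW_mulW]
    funext i
    rw [ubase_unitary s k hk t i, Matrix.one_kronecker_one]
    rfl
  · rw [W_mulW_star]
    funext i
    rw [mul_eq_one_comm.mp (ubase_unitary s k hk t i), Matrix.one_kronecker_one]
    rfl

lemma W_mul_incl_apply (t : ℕ) (Y : Matrix (Fin m) (Fin m) ℂ) (i : Fin s) :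
    (Wmat s m k t * fullIncl s m k Y) i = Y ⊗ₖ ubase s k t i := by
  rw [Pi.mul_apply, fullIncl_apply_kron]
  show ((1 : Matrix (Fin m) (Fin m) ℂ) ⊗ₖ ubase s k t i)
      * (Y ⊗ₖ (1 : Matrix (Fin (k i)) (Fin (k i)) ℂ)) = _
  rw [← Matrix.mul_kronecker_mul, Matrix.one_mul, Matrix.mul_one]

/-! ### linear independence and the basis -/

noncomputable def uFam : Fin (∑ i, k i ^ 2) → ∀ i, Matrix (Fin (k i)) (Fin (k i)) ℂ :=
  fun t => fun i => ubase s k t i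

noncomputable def pairL (C : ∀ i, Matrix (Fin (k i)) (Fin (k i)) ℂ) :
    (∀ i, Matrix (Fin (k i)) (Fin (k i)) ℂ) →ₗ[ℂ] ℂ where
  toFun D := ∑ i, (k i : ℂ) * Matrix.trace ((C i)ᴴ * D i)
  map_add' D D' := by
    simp only [Pi.add_apply, Matrix.mul_add, Matrix.trace_add, mul_add]
    rw [Finset.sum_add_distrib]
  map_smul' c D := by
    simp only [Pi.smul_apply, Matrix.mul_smul, Matrix.trace_smul, smul_eq_mul,
      RingHom.id_apply, Finset.mul_sum]
    exact Finset.sum_congr rfl fun i _ => by ring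

@[simp] lemma pairL_apply (C D : ∀ i, Matrix (Fin (k i)) (Fin (k i)) ℂ) :
    pairL s k C D = ∑ i, (k i : ℂ) * Matrix.trace ((C i)ᴴ * D i) := rfl

lemma pairL_uFam (hs : 0 < s) (hk : ∀ i, 0 < k i) (r t : Fin (∑ i, k i ^ 2)) :
    pairL s k (uFam s k r) (uFam s k t)
      = if r = t then ((∑ i, k i ^ 2 : ℕ) : ℂ) else 0 := by
  rw [pairL_apply]
  have h := ubase_gram s k hs hk (r : ℕ) (t : ℕ) r.isLt t.isLt
  simp only [uFam]
  rw [h]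
  simp only [Fin.val_inj]

lemma uFam_li (hs : 0 < s) (hk : ∀ i, 0 < k i) : LinearIndependent ℂ (uFam s k) := by
  have hKpos : 0 < ∑ i, k i ^ 2 :=
    Finset.sum_pos (fun i _ => pow_pos (hk i) 2) ⟨⟨0, hs⟩, Finset.mem_univ _⟩
  rw [Fintype.linearIndependent_iff]
  intro g hg r
  have h0 : pairL s k (uFam s k r) (∑ t, g t • uFam s k t) = 0 := by
    rw [hg]
    simp
  rw [map_sum] at h0
  simp_rw [_root_.map_smul, smul_eq_mul, pairL_uFam s k hs hk] at h0
  simp only [mul_ite, mul_zero, Finset.sum_ite_eq, Finset.mem_univ, if_true] at h0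
  have hKc : ((∑ i, k i ^ 2 : ℕ) : ℂ) ≠ 0 := Nat.cast_ne_zero.mpr hKpos.ne'
  exact (mul_eq_zero.mp h0).resolve_right hKc

noncomputable def uBasis (hs : 0 < s) (hk : ∀ i, 0 < k i) :
    Module.Basis (Fin (∑ i, k i ^ 2)) ℂ (∀ i, Matrix (Fin (k i)) (Fin (k i)) ℂ) :=
  haveI : Nonempty (Fin (∑ i, k i ^ 2)) :=
    ⟨⟨0, Finset.sum_pos (fun i _ => pow_pos (hk i) 2) ⟨⟨0, hs⟩, Finset.mem_univ _⟩⟩⟩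
  basisOfLinearIndependentOfCardEqFinrank (uFam_li s k hs hk) (by
    rw [Fintype.card_fin, Module.finrank_pi_fintype]
    simp only [Module.finrank_matrix, Fintype.card_fin, Module.finrank_self, mul_one]
    exact Finset.sum_congr rfl fun i _ => pow_two (k i))

lemma coe_uBasis (hs : 0 < s) (hk : ∀ i, 0 < k i) :
    ⇑(uBasis s k hs hk) = uFam s k := by
  haveI : Nonempty (Fin (∑ i, k i ^ 2)) :=
    ⟨⟨0, Finset.sum_pos (fun i _ => pow_pos (hk i) 2) ⟨⟨0, hs⟩, Finset.mem_univ _⟩⟩⟩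
  exact coe_basisOfLinearIndependentOfCardEqFinrank _ _

lemma span_W_incl (hs : 0 < s) (hk : ∀ i, 0 < k i) :
    Submodule.span ℂ (Set.range
      (fun tY : Fin (∑ i, k i ^ 2) × Matrix (Fin m) (Fin m) ℂ =>
        Wmat s m k tY.1 * fullIncl s m k tY.2)) = ⊤ := by
  rw [eq_top_iff]
  rintro X -
  obtain ⟨z, rfl⟩ := bigHom_surjective s m k X
  have hz : z ∈ Submodule.span ℂ
      {x : (Matrix (Fin m) (Fin m) ℂ) ⊗[ℂ] (∀ i, Matrix (Fin (k i)) (Fin (k i)) ℂ) |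
        ∃ a b, a ⊗ₜ b = x} := by
    rw [TensorProduct.span_tmul_eq_top]
    exact Submodule.mem_top
  refine Submodule.span_induction ?_ ?_ ?_ ?_ hz
  · rintro x ⟨a, b, rfl⟩
    rw [bigHom_tmul]
    have hb : ∑ t, (uBasis s k hs hk).repr b t • uFam s k t = b := by
      conv_rhs => rw [← Module.Basis.sum_repr (uBasis s k hs hk) b]
      rw [coe_uBasis s k hs hk]
    have key : (fun i => a ⊗ₖ b i)
        = ∑ t, (uBasis s k hs hk).repr b t • (Wmat s m k t * fullIncl s m k a) := by
      funext i
      rw [Finset.sum_apply]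
      conv_lhs => rw [← hb]
      rw [Finset.sum_apply]
      simp_rw [Pi.smul_apply, W_mul_incl_apply s m k]
      rw [kron_sum_right]
      simp_rw [Matrix.kronecker_smul]
      rfl
    rw [key]
    exact Submodule.sum_mem _ fun t _ =>
      Submodule.smul_mem _ _ (Submodule.subset_span ⟨(t, a), rfl⟩)
  · rw [map_zero]
    exact Submodule.zero_mem _
  · intro x y _ _ hx hy
    rw [map_add]
    exact Submodule.add_mem _ hx hy
  · intro c x _ hx
    rw [_root_.map_smul]
    exact Submodule.smul_mem _ _ hx

end FullSubProof

/-- If ℬ = M_m ⊆ 𝒜 = ⊕ᵢ M_{nᵢ} with nᵢ = m·kᵢ, then the inclusion is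
isomorphic to the tensor product of the trivial inclusion M_m ⊆ M_m with
ℂ ⊆ ⊕ᵢ M_{kᵢ}; consequently, if E preserves the Markov trace, (M_m ⊆ 𝒜, E)
admits a unitary orthonormal basis of cardinality ∑ᵢ kᵢ². -/
theorem full_matrix_subalgebra_U_property
    (s m : ℕ) (hs : 0 < s) (hm : 0 < m) (k : Fin s → ℕ) (hk : ∀ i, 0 < k i)
    (E : (∀ i, Matrix (Fin m × Fin (k i)) (Fin m × Fin (k i)) ℂ) →ₗ[ℂ]
          Matrix (Fin m) (Fin m) ℂ)
    -- E is a conditional expectation onto M_m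
    (hEfix : ∀ Y, E (fullIncl s m k Y) = Y)
    (hEbim : ∀ Y Z X, E (fullIncl s m k Y * X * fullIncl s m k Z) = Y * E X * Z)
    -- E preserves the Markov trace
    (hEtr : ∀ X, markovTrace s m k (fullIncl s m k (E X)) = markovTrace s m k X) :
    (∃ Φ : (∀ i, Matrix (Fin m × Fin (k i)) (Fin m × Fin (k i)) ℂ) ≃ₐ[ℂ]
        (Matrix (Fin m) (Fin m) ℂ) ⊗[ℂ] (∀ i, Matrix (Fin (k i)) (Fin (k i)) ℂ),
      ∀ Y : Matrix (Fin m) (Fin m) ℂ, Φ (fullIncl s m k Y) = Y ⊗ₜ[ℂ] 1) ∧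
    (∃ W : Fin (∑ i, (k i) ^ 2) →
        (∀ i, Matrix (Fin m × Fin (k i)) (Fin m × Fin (k i)) ℂ),
      (∀ t, W t ∈ unitary (∀ i, Matrix (Fin m × Fin (k i)) (Fin m × Fin (k i)) ℂ)) ∧
      (∀ t t', E (star (W t) * W t') = if t = t' then 1 else 0) ∧
      (∀ X, X = ∑ t, W t * fullIncl s m k (E (star (W t) * X)))) := by
  classical
  have hmc : (m : ℂ) ≠ 0 := Nat.cast_ne_zero.mpr hm.ne'
  have hKpos : 0 < ∑ i, k i ^ 2 :=
    Finset.sum_pos (fun i _ => pow_pos (hk i) 2) ⟨⟨0, hs⟩, Finset.mem_univ _⟩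
  have hKc : ((∑ i, k i ^ 2 : ℕ) : ℂ) ≠ 0 := Nat.cast_ne_zero.mpr hKpos.ne'
  -- E-characterization
  have hE_left : ∀ B X, E (fullIncl s m k B * X) = B * E X := by
    intro B X
    have h := hEbim B 1 X
    rwa [FullSubProof.fullIncl_one, mul_one, mul_one] at h
  have hE_right : ∀ X Y, E (X * fullIncl s m k Y) = E X * Y := by
    intro X Y
    have h := hEbim 1 Y X
    rwa [FullSubProof.fullIncl_one, one_mul, one_mul] at h
  have hEntry : ∀ X (p q : Fin m),
      E X p q = m * markovTrace s m k (fullIncl s m k (Matrix.single q p 1) * X) := by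
    intro X p q
    have h1 := hEtr (fullIncl s m k (Matrix.single q p 1) * X)
    rw [hE_left, FullSubProof.markov_fullIncl s m k hs hm hk,
      FullSubProof.trace_stdBM_mul] at h1
    rw [← h1]
    field_simp
  have htrB : ∀ p q : Fin m,
      Matrix.trace (Matrix.single q p (1 : ℂ)) = if p = q then 1 else 0 := by
    intro p q
    have h := FullSubProof.trace_stdBM_mul m q p (1 : Matrix (Fin m) (Fin m) ℂ)
    rw [mul_one] at h
    rw [h, Matrix.one_apply]
  have hEkron : ∀ v : ∀ i, Matrix (Fin (k i)) (Fin (k i)) ℂ,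
      E (fun i => (1 : Matrix (Fin m) (Fin m) ℂ) ⊗ₖ v i)
        = ((∑ i, (k i : ℂ) * Matrix.trace (v i)) / ((∑ i, k i ^ 2 : ℕ) : ℂ)) • 1 := by
    intro v
    ext p q
    rw [hEntry, FullSubProof.incl_mul_onekron, markovTrace]
    rw [Finset.sum_congr rfl fun i _ => by
      rw [Matrix.trace_kronecker, htrB p q]]
    have hden : ∑ i, ((m * k i : ℕ) : ℂ) ^ 2
        = (m : ℂ) ^ 2 * ((∑ j, k j ^ 2 : ℕ) : ℂ) := by
      push_cast
      rw [Finset.mul_sum]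
      exact Finset.sum_congr rfl fun i _ => by ring
    rw [hden]
    by_cases hpq : p = q
    · subst hpq
      simp only [eq_self_iff_true, if_true]
      have hnum : ∑ i, ((m * k i : ℕ) : ℂ) * ((1 : ℂ) * Matrix.trace (v i))
          = (m : ℂ) * ∑ i, (k i : ℂ) * Matrix.trace (v i) := by
        push_cast
        rw [Finset.mul_sum]
        exact Finset.sum_congr rfl fun i _ => by ring
      rw [hnum, Matrix.smul_apply, Matrix.one_apply_eq, smul_eq_mul, mul_one]
      have hS : (∑ x : Fin s, ((k x : ℕ) : ℂ) ^ 2) ≠ 0 := by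
        have hKc2 := hKc
        push_cast at hKc2
        exact hKc2
      field_simp
    · simp only [if_neg hpq, zero_mul, mul_zero, Finset.sum_const_zero, zero_div,
        Matrix.smul_apply, Matrix.one_apply_ne hpq, smul_zero]
  -- orthonormality
  have horth : ∀ t t' : Fin (∑ i, k i ^ 2),
      E (star (FullSubProof.Wmat s m k t) * FullSubProof.Wmat s m k t')
        = if t = t' then 1 else 0 := by
    intro t t'
    rw [FullSubProof.starW_mulW, hEkron]
    rw [FullSubProof.ubase_gram s k hs hk (t : ℕ) (t' : ℕ) t.isLt t'.isLt]
    simp only [Fin.val_inj]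
    by_cases htt : t = t'
    · rw [if_pos htt, if_pos htt, div_self hKc, one_smul]
    · rw [if_neg htt, if_neg htt, zero_div, zero_smul]
  refine ⟨⟨FullSubProof.bigEquiv s m k, fun Y => FullSubProof.bigEquiv_fullIncl s m k Y⟩,
    ⟨fun t => FullSubProof.Wmat s m k t, fun t => FullSubProof.Wmat_unitary s m k hk t,
      fun t t' => horth t t', ?_⟩⟩
  -- reconstruction
  intro X
  set T : (∀ i, Matrix (Fin m × Fin (k i)) (Fin m × Fin (k i)) ℂ) →ₗ[ℂ]
      (∀ i, Matrix (Fin m × Fin (k i)) (Fin m × Fin (k i)) ℂ) :=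
    ∑ t : Fin (∑ i, k i ^ 2),
      (LinearMap.mulLeft ℂ (FullSubProof.Wmat s m k t)).comp
        ((FullSubProof.fullInclL s m k).comp
          (E.comp (LinearMap.mulLeft ℂ (star (FullSubProof.Wmat s m k t))))) with hT
  have hTapp : ∀ Z, T Z = ∑ t : Fin (∑ i, k i ^ 2),
      FullSubProof.Wmat s m k t
        * fullIncl s m k (E (star (FullSubProof.Wmat s m k t) * Z)) := by
    intro Z
    rw [hT, LinearMap.sum_apply]
    exact Finset.sum_congr rfl fun t _ => rfl
  have hgen : ∀ (r : Fin (∑ i, k i ^ 2)) (Y : Matrix (Fin m) (Fin m) ℂ),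
      T (FullSubProof.Wmat s m k r * fullIncl s m k Y)
        = FullSubProof.Wmat s m k r * fullIncl s m k Y := by
    intro r Y
    rw [hTapp]
    have hterm : ∀ t : Fin (∑ i, k i ^ 2),
        FullSubProof.Wmat s m k t * fullIncl s m k
            (E (star (FullSubProof.Wmat s m k t)
              * (FullSubProof.Wmat s m k r * fullIncl s m k Y)))
          = if t = r then FullSubProof.Wmat s m k r * fullIncl s m k Y else 0 := by
      intro t
      rw [← mul_assoc, hE_right, horth t r]
      by_cases h : t = r
      · rw [if_pos h, if_pos h, one_mul, h]
      · rw [if_neg h, if_neg h, zero_mul, FullSubProof.fullIncl_zero, mul_zero]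
    rw [Finset.sum_congr rfl fun t _ => hterm t]
    rw [Finset.sum_ite_eq' Finset.univ r
      (fun _ => FullSubProof.Wmat s m k r * fullIncl s m k Y)]
    rw [if_pos (Finset.mem_univ r)]
  have hTid : T = LinearMap.id := by
    apply LinearMap.ext_on (FullSubProof.span_W_incl s m k hs hk)
    rintro x ⟨⟨t, Y⟩, rfl⟩
    simp only [LinearMap.id_coe, id_eq]
    exact hgen t Y
  have h1 := hTapp X
  rw [hTid, LinearMap.id_apply] at h1
  exact h1
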